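/- Let (Ω, 𝒜, P) be a probability space, X : Ω → 𝒳 a measurable map into a measurable space 𝒳, 𝒢 = σ(X), and ℋ = σ(X, T) for a square-integrable random variable T. Suppose the auxiliary outcome follows the partially linear model W = φ(X)·T + f(X) + δ where φ, f, α, θ : 𝒳 → ℝ are measurable, φ∘X and α∘X are bounded, f∘X and δ are square-integrable, E[δ | ℋ] = 0 almost surely, and the outcome link holds in the form θ(x) = α(x)·φ(x) for all x. Then the auxiliary component of the efficient score has mean zero at the truth: E[(α(X)·(W − E[W | 𝒢]) − θ(X)·(T − E[T | 𝒢]))·(T − E[T | 𝒢])] = 0. -/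

import Mathlib

open MeasureTheory ProbabilityTheory

/-- The σ-algebra generated by a map `X`. -/
abbrev sigmaGen {Ω 𝒳 : Type*} [MeasurableSpace 𝒳] (X : Ω → 𝒳) : MeasurableSpace Ω :=
  MeasurableSpace.comap X inferInstance

/-- The σ-algebra generated jointly by `X` and `T`. -/
abbrev sigmaGen₂ {Ω 𝒳 : Type*} [MeasurableSpace 𝒳] (X : Ω → 𝒳) (T : Ω → ℝ) :
    MeasurableSpace Ω :=
  MeasurableSpace.comap (fun ω => (X ω, T ω)) inferInstance

lemma memℒp_two_condexp' {Ω : Type*} {m m0 : MeasurableSpace Ω} (hm : m ≤ m0)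
    (P : Measure Ω) [IsFiniteMeasure P] {f : Ω → ℝ} (hf : MemLp f 2 P) :
    MemLp (P[f|m]) 2 P := by
  have hfi : Integrable f P := hf.integrable one_le_two
  have hae : (↑(condExpL2 ℝ ℝ hm (hf.toLp f)) : Ω → ℝ) =ᵐ[P] P[f|m] := by
    refine ae_eq_condExp_of_forall_setIntegral_eq hm hfi ?_ ?_ ?_
    · intro s _ _
      exact ((Lp.memLp _).integrable one_le_two).integrableOn
    · intro s hs hμs
      rw [integral_condExpL2_eq hm (hf.toLp f) hs hμs.ne]
      exact setIntegral_congr_ae (hm s hs) ((hf.coeFn_toLp).mono fun ω h _ => h)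
    · exact lpMeas.aestronglyMeasurable _
  exact (Lp.memLp _).ae_eq hae

/-- **The auxiliary component of the efficient score has mean zero at the truth.**
If `W = φ(X)·T + f(X) + δ` with `E[δ | σ(X,T)] = 0` a.s. and the outcome link gives
`θ(x) = α(x)·φ(x)`, then
`E[(α(X)·(W - E[W|σ(X)]) - θ(X)·(T - E[T|σ(X)]))·(T - E[T|σ(X)])] = 0`. -/
theorem auxiliary_efficient_score_mean_zero
    {Ω 𝒳 : Type*} [MeasurableSpace Ω] [MeasurableSpace 𝒳]
    (P : Measure Ω) [IsProbabilityMeasure P]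
    (X : Ω → 𝒳) (hX : Measurable X)
    (T : Ω → ℝ) (hT : Measurable T) (hT2 : MemLp T 2 P)
    (φ f α θ : 𝒳 → ℝ) (hφ : Measurable φ) (hf : Measurable f)
    (hα : Measurable α) (hθ : Measurable θ)
    (Cφ : ℝ) (hφbdd : ∀ ω, |φ (X ω)| ≤ Cφ)
    (Cα : ℝ) (hαbdd : ∀ ω, |α (X ω)| ≤ Cα)
    (hfX2 : MemLp (fun ω => f (X ω)) 2 P)
    (δ : Ω → ℝ) (hδ2 : MemLp δ 2 P)
    (hδmean : P[δ | sigmaGen₂ X T] =ᵐ[P] 0)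
    (hlink : ∀ x, θ x = α x * φ x)
    (W : Ω → ℝ) (hWdef : ∀ ω, W ω = φ (X ω) * T ω + f (X ω) + δ ω) :
    ∫ ω, (α (X ω) * (W ω - (P[W | sigmaGen X]) ω)
          - θ (X ω) * (T ω - (P[T | sigmaGen X]) ω))
        * (T ω - (P[T | sigmaGen X]) ω) ∂P = 0 := by
  have hm : sigmaGen X ≤ ‹MeasurableSpace Ω› := hX.comap_le
  have hXT : Measurable fun ω => (X ω, T ω) := hX.prodMk hT
  have hm2 : sigmaGen₂ X T ≤ ‹MeasurableSpace Ω› := hXT.comap_le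
  have hm12 : sigmaGen X ≤ sigmaGen₂ X T := by
    calc sigmaGen X
        = MeasurableSpace.comap (fun ω => (X ω, T ω))
            (MeasurableSpace.comap Prod.fst inferInstance) := by
          exact (MeasurableSpace.comap_comp (f := Prod.fst) (g := fun ω => (X ω, T ω))).symm
      _ ≤ sigmaGen₂ X T := MeasurableSpace.comap_mono measurable_fst.comap_le
  haveI : SigmaFinite (P.trim hm) := by infer_instance
  haveI : SigmaFinite (P.trim hm2) := by infer_instance
  have hXm : Measurable[sigmaGen X] X := Measurable.of_comap_le le_rfl
  have hXTm2 : Measurable[sigmaGen₂ X T] fun ω => (X ω, T ω) := Measurable.of_comap_le le_rfl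
  have hTm2 : Measurable[sigmaGen₂ X T] T := measurable_snd.comp hXTm2
  -- integrability
  have hTi : Integrable T P := hT2.integrable one_le_two
  have hδi : Integrable δ P := hδ2.integrable one_le_two
  have hfXi : Integrable (fun ω => f (X ω)) P := hfX2.integrable one_le_two
  have hφT2 : MemLp (fun ω => φ (X ω) * T ω) 2 P := by
    refine hT2.of_le_mul (c := Cφ) ((hφ.comp hX).aestronglyMeasurable.mul hT2.1) ?_
    refine Filter.Eventually.of_forall fun ω => ?_
    simp only [Real.norm_eq_abs, abs_mul]
    exact mul_le_mul_of_nonneg_right (hφbdd ω) (abs_nonneg _)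
  have hφTi : Integrable (fun ω => φ (X ω) * T ω) P := hφT2.integrable one_le_two
  -- E[δ | σ(X)] = 0
  have hδm : P[δ | sigmaGen X] =ᵐ[P] 0 := by
    have h1 : P[P[δ | sigmaGen₂ X T] | sigmaGen X] =ᵐ[P] P[δ | sigmaGen X] :=
      condExp_condExp_of_le hm12 hm2
    have h2 : P[P[δ | sigmaGen₂ X T] | sigmaGen X] =ᵐ[P] P[(0 : Ω → ℝ) | sigmaGen X] :=
      condExp_congr_ae hδmean
    rw [condExp_zero] at h2
    exact h1.symm.trans h2
  -- E[W | σ(X)]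
  have hμW : P[W | sigmaGen X]
      =ᵐ[P] fun ω => φ (X ω) * (P[T | sigmaGen X]) ω + f (X ω) := by
    have hWfun : W = (fun ω => φ (X ω) * T ω) + ((fun ω => f (X ω)) + δ) := by
      funext ω; simp [hWdef ω]; ring
    have hadd : P[W | sigmaGen X]
        =ᵐ[P] P[fun ω => φ (X ω) * T ω | sigmaGen X]
              + P[(fun ω => f (X ω)) + δ | sigmaGen X] := by
      rw [hWfun]; exact condExp_add hφTi (hfXi.add hδi) _
    have hadd2 : P[(fun ω => f (X ω)) + δ | sigmaGen X]
        =ᵐ[P] P[fun ω => f (X ω) | sigmaGen X] + P[δ | sigmaGen X] :=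
      condExp_add hfXi hδi _
    have hfid : P[fun ω => f (X ω) | sigmaGen X] = fun ω => f (X ω) :=
      condExp_of_stronglyMeasurable hm (hf.comp hXm).stronglyMeasurable hfXi
    have hpull : P[fun ω => φ (X ω) * T ω | sigmaGen X]
        =ᵐ[P] (fun ω => φ (X ω)) * P[T | sigmaGen X] :=
      condExp_mul_of_stronglyMeasurable_left (hφ.comp hXm).stronglyMeasurable hφTi hTi
    filter_upwards [hadd, hadd2, hpull, hδm] with ω h1 h2 h3 h4
    simp only [Pi.add_apply, Pi.mul_apply, Pi.zero_apply] at *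
    rw [h1, h2, h3, hfid, h4]; ring
  -- the key function g
  set μT := P[T | sigmaGen X] with hμTdef
  set g : Ω → ℝ := fun ω => α (X ω) * (T ω - μT ω) with hgdef
  have hμT2 : MemLp μT 2 P := memℒp_two_condexp' hm P hT2
  have hg2 : MemLp g 2 P := by
    refine (hT2.sub hμT2).of_le_mul (c := Cα)
      ((hα.comp hX).aestronglyMeasurable.mul (hT2.sub hμT2).1) ?_
    refine Filter.Eventually.of_forall fun ω => ?_
    show ‖α (X ω) * (T ω - μT ω)‖ ≤ _
    simp only [Real.norm_eq_abs, abs_mul, Pi.sub_apply]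
    exact mul_le_mul_of_nonneg_right (hαbdd ω) (abs_nonneg _)
  have hgδi : Integrable (g * δ) P := by
    rw [← memLp_one_iff_integrable]
    have := hδ2.smul (𝕜 := ℝ) hg2 (r := 1) (hpqr := ⟨by norm_num [ENNReal.inv_two_add_inv_two]⟩)
    simpa [smul_eq_mul] using this
  have hgm2 : StronglyMeasurable[sigmaGen₂ X T] g := by
    refine ((hα.comp (measurable_fst.comp hXTm2)).stronglyMeasurable.mul
      (hTm2.stronglyMeasurable.sub ?_))
    exact stronglyMeasurable_condExp.mono hm12
  -- ∫ g δ = 0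
  have hkey : ∫ ω, g ω * δ ω ∂P = 0 := by
    have h0 : P[g * δ | sigmaGen₂ X T] =ᵐ[P] 0 := by
      have := condExp_mul_of_stronglyMeasurable_left hgm2 hgδi hδi
      filter_upwards [this, hδmean] with ω h1 h2
      simp only [Pi.mul_apply, Pi.zero_apply] at *
      rw [h1, h2, mul_zero]
    calc ∫ ω, g ω * δ ω ∂P = ∫ ω, (g * δ) ω ∂P := rfl
      _ = ∫ ω, (P[g * δ | sigmaGen₂ X T]) ω ∂P := (integral_condExp hm2 (f := g * δ)).symm
      _ = ∫ ω, (0 : Ω → ℝ) ω ∂P := integral_congr_ae h0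
      _ = 0 := by simp
  -- conclude
  rw [← hkey]
  refine integral_congr_ae ?_
  filter_upwards [hμW] with ω h
  rw [hWdef ω, hlink (X ω), hgdef]
  simp only [← hμTdef] at h ⊢
  rw [h]
  ring
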